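/- Let l ∈ ℂ. If there exists no p ∈ ℤ with 2p + k + l - 1 = 0 and no p ∈ ℤ with 2p + k - l - 1 = 0 (e.g., whenever l + k is not an odd integer), then the principal series module with basis (e_p)_{p∈ℤ} and operators E e_p = (-(p+k/2) - (l-1)/2)e_{p-1}, F e_p = ((p+k/2) - (l-1)/2)e_{p+1}, H e_p = -2(p+k/2)e_p is irreducible: its only submodules invariant under E, F, H are 0 and the whole space. -/

import Mathlib

/-- Operator on the free ℂ-module on basis `(e_p)_{p ∈ ℤ}` (encoded as `ℤ →₀ ℂ`)
sending `e_p` to `a p • e_(p+s)`. -/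
noncomputable def sop (a : ℤ → ℂ) (s : ℤ) : Module.End ℂ (ℤ →₀ ℂ) :=
  Finsupp.lsum ℂ fun p => a p • Finsupp.lsingle (p + s)

/-- `E e_p = (-(p + k/2) - (l-1)/2) e_(p-1)`. -/
noncomputable def Eop (k l : ℂ) : Module.End ℂ (ℤ →₀ ℂ) :=
  sop (fun p => -((p : ℂ) + k / 2) - (l - 1) / 2) (-1)
/-- `F e_p = ((p + k/2) - (l-1)/2) e_(p+1)`. -/
noncomputable def Fop (k l : ℂ) : Module.End ℂ (ℤ →₀ ℂ) :=
  sop (fun p => ((p : ℂ) + k / 2) - (l - 1) / 2) 1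
/-- `H e_p = -2 (p + k/2) e_p`. -/
noncomputable def Hop (k : ℂ) : Module.End ℂ (ℤ →₀ ℂ) :=
  sop (fun p => -2 * ((p : ℂ) + k / 2)) 0

lemma sop_single (a : ℤ → ℂ) (s p : ℤ) (c : ℂ) :
    sop a s (Finsupp.single p c) = Finsupp.single (p + s) (a p * c) := by
  rw [sop, Finsupp.lsum_single, LinearMap.smul_apply, Finsupp.lsingle_apply,
    Finsupp.smul_single, smul_eq_mul]

lemma diag_apply (a : ℤ → ℂ) (x : ℤ →₀ ℂ) (q : ℤ) :
    sop a 0 x q = a q * x q := by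
  induction x using Finsupp.induction_linear with
  | zero => rw [map_zero]; simp
  | add f g hf hg => rw [map_add, Finsupp.add_apply, hf, hg, Finsupp.add_apply]; ring
  | single p c =>
      rw [sop_single, add_zero]
      simp only [Finsupp.single_apply]
      split_ifs with h
      · subst h; ring
      · ring

theorem principal_series_irreducible (k l : ℂ) (hk : k = 0 ∨ k = 1)
    (h1 : ∀ p : ℤ, 2 * (p : ℂ) + k + l - 1 ≠ 0)
    (h2 : ∀ p : ℤ, 2 * (p : ℂ) + k - l - 1 ≠ 0) :
    ∀ p : Submodule ℂ (ℤ →₀ ℂ),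
      (∀ x ∈ p, Eop k l x ∈ p) →
      (∀ x ∈ p, Fop k l x ∈ p) →
      (∀ x ∈ p, Hop k x ∈ p) →
      p = ⊥ ∨ p = ⊤ := by
  intro p hE hF hH
  by_cases hbot : p = ⊥
  · exact Or.inl hbot
  right
  -- pick a nonzero element of p
  obtain ⟨x, hxp, hx0⟩ : ∃ x ∈ p, x ≠ 0 := by
    by_contra h
    push_neg at h
    exact hbot (le_bot_iff.mp fun y hy => by simpa using h y hy)
  set μ : ℤ → ℂ := fun r => -2 * ((r : ℂ) + k / 2) with hμ
  have μinj : Function.Injective μ := by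
    intro a b hab
    have : (a : ℂ) = b := by
      simp only [hμ] at hab
      linear_combination (-1/2 : ℂ) * hab
    exact_mod_cast this
  have hHapp : ∀ (y : ℤ →₀ ℂ) (j : ℤ), Hop k y j = μ j * y j := fun y j =>
    diag_apply _ y j
  -- applying ∏ (H - μ r) over a finset stays in p and scales coordinates
  have key : ∀ S : Finset ℤ, ∀ y ∈ p, ∃ z ∈ p,
      ∀ j : ℤ, z j = (∏ r ∈ S, (μ j - μ r)) * y j := by
    intro S
    induction S using Finset.induction_on with
    | empty => intro y hy; exact ⟨y, hy, fun j => by simp⟩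
    | insert _ _ hnotmem _ =>
        rename_i a S ih
        intro y hy
        obtain ⟨z, hz, hzj⟩ := ih y hy
        refine ⟨Hop k z - μ a • z, sub_mem (hH z hz) (Submodule.smul_mem p _ hz), ?_⟩
        intro j
        rw [Finsupp.sub_apply, Finsupp.smul_apply, hHapp, hzj j,
          Finset.prod_insert hnotmem, smul_eq_mul]
        ring
  -- extract a single basis vector from x
  obtain ⟨q, hq⟩ : ∃ q, x q ≠ 0 := by
    by_contra h
    push_neg at h
    exact hx0 (Finsupp.ext h)
  obtain ⟨z, hz, hzj⟩ := key (x.support.erase q) x hxp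
  set c : ℂ := ∏ r ∈ x.support.erase q, (μ q - μ r) with hc
  have hc0 : c ≠ 0 := by
    rw [hc]
    refine Finset.prod_ne_zero_iff.mpr fun r hr => ?_
    have hrq : r ≠ q := (Finset.mem_erase.mp hr).1
    exact sub_ne_zero.mpr fun h => hrq (μinj h.symm)
  have hzeq : z = Finsupp.single q (c * x q) := by
    ext j
    rcases eq_or_ne j q with rfl | hjq
    · rw [hzj j, Finsupp.single_apply, if_pos rfl]
    · rw [hzj j, Finsupp.single_apply, if_neg (Ne.symm hjq)]
      by_cases hjs : j ∈ x.support
      · have : (μ j - μ j) = 0 := sub_self _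
        rw [Finset.prod_eq_zero (Finset.mem_erase.mpr ⟨hjq, hjs⟩) this, zero_mul]
      · rw [Finsupp.notMem_support_iff.mp hjs, mul_zero]
  -- so single q 1 ∈ p
  have hsingle_mem : ∀ r : ℤ, Finsupp.single r (1 : ℂ) ∈ p → ∀ c : ℂ,
      Finsupp.single r c ∈ p := by
    intro r hr c
    have := Submodule.smul_mem p c hr
    rwa [Finsupp.smul_single, smul_eq_mul, mul_one] at this
  have hq1 : Finsupp.single q (1 : ℂ) ∈ p := by
    have hmem : Finsupp.single q (c * x q) ∈ p := hzeq ▸ hz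
    have hcx : c * x q ≠ 0 := mul_ne_zero hc0 hq
    have := Submodule.smul_mem p (c * x q)⁻¹ hmem
    rwa [Finsupp.smul_single, smul_eq_mul, inv_mul_cancel₀ hcx] at this
  -- ladder operators move between basis vectors
  have stepF : ∀ r : ℤ, Finsupp.single r (1 : ℂ) ∈ p →
      Finsupp.single (r + 1) (1 : ℂ) ∈ p := by
    intro r hr
    have hmem := hF _ hr
    rw [show Fop k l = sop (fun p => ((p : ℂ) + k / 2) - (l - 1) / 2) 1 from rfl,
      sop_single] at hmem
    have hne : ((r : ℂ) + k / 2) - (l - 1) / 2 ≠ 0 := by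
      intro h
      exact h2 (r + 1) (by push_cast; linear_combination 2 * h)
    have := Submodule.smul_mem p (((r : ℂ) + k / 2) - (l - 1) / 2)⁻¹ hmem
    rwa [Finsupp.smul_single, smul_eq_mul, mul_one, inv_mul_cancel₀ hne] at this
  have stepE : ∀ r : ℤ, Finsupp.single r (1 : ℂ) ∈ p →
      Finsupp.single (r - 1) (1 : ℂ) ∈ p := by
    intro r hr
    have hmem := hE _ hr
    rw [show Eop k l = sop (fun p => -((p : ℂ) + k / 2) - (l - 1) / 2) (-1) from rfl,
      sop_single] at hmem
    have hne : -((r : ℂ) + k / 2) - (l - 1) / 2 ≠ 0 := by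
      intro h
      exact h1 r (by linear_combination (-2) * h)
    have := Submodule.smul_mem p (-((r : ℂ) + k / 2) - (l - 1) / 2)⁻¹ hmem
    rw [Finsupp.smul_single, smul_eq_mul, mul_one, inv_mul_cancel₀ hne] at this
    rwa [show r + (-1) = r - 1 from by ring] at this
  have all_single : ∀ r : ℤ, Finsupp.single r (1 : ℂ) ∈ p := by
    intro r
    rcases le_or_gt q r with h | h
    · obtain ⟨n, rfl⟩ := Int.le.dest h
      clear h
      induction n with
      | zero => simpa using hq1
      | succ m ih =>
          have := stepF (q + m) ih
          rwa [show q + (m : ℤ) + 1 = q + ((m : ℤ) + 1) from by ring,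
            show ((m : ℤ) + 1) = ((m + 1 : ℕ) : ℤ) from by push_cast; ring] at this
    · obtain ⟨n, hn⟩ : ∃ n : ℕ, r = q - n := ⟨(q - r).toNat, by omega⟩
      subst hn
      clear h
      induction n with
      | zero => simpa using hq1
      | succ m ih =>
          have := stepE (q - m) ih
          rwa [show q - (m : ℤ) - 1 = q - ((m + 1 : ℕ) : ℤ) from by push_cast; ring] at this
  -- conclude p = ⊤
  rw [Submodule.eq_top_iff']
  intro y
  induction y using Finsupp.induction_linear with
  | zero => exact p.zero_mem
  | add f g hf hg => exact p.add_mem hf hg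
  | single r c => exact hsingle_mem r (all_single r) c
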